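/- If D = (E, F) is a set system and A is a feasible set of minimum cardinality, then D^{*|A} is normal (the empty set is feasible), and moreover D^{*×|A}, D^{×*|A}, and D^{*×*|A} are all normal. -/
import Mathlib


open Finset Polynomial

variable {α : Type*} [DecidableEq α]

/-- The twist of a collection of feasible sets with respect to `A`. -/
noncomputable def SS.twist (A : Finset α) (F : Finset (Finset α)) : Finset (Finset α) :=
  F.image (fun X => symmDiff A X)

/-- Loop complementation at a single element `e`. -/
noncomputable def SS.lc (e : α) (F : Finset (Finset α)) : Finset (Finset α) :=
  symmDiff F ((F.filter (fun X => e ∉ X)).image (insert e))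

/-- The two generating operations: twist `*` and loop complementation `×`. -/
inductive SS.Op | star | cross

/-- Apply a single operation at a single element. -/
noncomputable def SS.opElem : SS.Op → α → Finset (Finset α) → Finset (Finset α)
  | .star, e, F => SS.twist {e} F
  | .cross, e, F => SS.lc e F

/-- Apply a word in `{*, ×}` at a single element. -/
noncomputable def SS.wordElem (w : List SS.Op) (e : α) (F : Finset (Finset α)) : Finset (Finset α) :=
  w.foldl (fun F o => SS.opElem o e F) F

/-- Apply a word in `{*, ×}` elementwise on a subset `A`. -/
noncomputable def SS.wordOn (w : List SS.Op) (A : Finset α) (F : Finset (Finset α)) : Finset (Finset α) :=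
  A.toList.foldl (fun F e => SS.wordElem w e F) F

/-- Size of a largest feasible set. -/
noncomputable def SS.rmax (F : Finset (Finset α)) : ℕ := F.sup Finset.card

/-- Size of a smallest feasible set. -/
noncomputable def SS.rmin (F : Finset (Finset α)) : ℕ := sInf (Finset.card '' (F : Set (Finset α)))

/-- The width of a set system. -/
noncomputable def SS.width (F : Finset (Finset α)) : ℕ := SS.rmax F - SS.rmin F

/-- The minimum-cardinality feasible sets. -/
noncomputable def SS.Fmin (F : Finset (Finset α)) : Finset (Finset α) :=
  F.filter (fun X => X.card = SS.rmin F)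

/-- The maximum-cardinality feasible sets. -/
noncomputable def SS.Fmax (F : Finset (Finset α)) : Finset (Finset α) :=
  F.filter (fun X => X.card = SS.rmax F)

/-- The partial-`w` polynomial of a set system with ground set `E`. -/
noncomputable def SS.poly (w : List SS.Op) (E : Finset α) (F : Finset (Finset α)) :
    Polynomial ℤ :=
  ∑ A ∈ E.powerset, (Polynomial.X : Polynomial ℤ) ^ SS.width (SS.wordOn w A F)

/-- A proper set system satisfying the symmetric exchange axiom. -/
noncomputable def SS.IsDeltaMatroid (F : Finset (Finset α)) : Prop :=
  F.Nonempty ∧ ∀ X ∈ F, ∀ Y ∈ F, ∀ u ∈ symmDiff X Y,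
    ∃ v ∈ symmDiff X Y, symmDiff X {u, v} ∈ F

/-- Apply a sequence of single-element twists and loop complementations. -/
noncomputable def SS.seqApply : List (SS.Op × α) → Finset (Finset α) → Finset (Finset α)
  | [], F => F
  | (o, e) :: s, F => SS.seqApply s (SS.opElem o e F)

/-- A set system is vf-safe if every sequence of single-element twists and loop
complementations yields a delta-matroid. -/
noncomputable def SS.VfSafe (F : Finset (Finset α)) : Prop :=
  ∀ s : List (SS.Op × α), SS.IsDeltaMatroid (SS.seqApply s F)

/-- The direct sum of two set systems. -/
noncomputable def SS.dsum (F F' : Finset (Finset α)) : Finset (Finset α) :=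
  (F ×ˢ F').image (fun p => p.1 ∪ p.2)

open SS

section Aux

variable {F G : Finset (Finset α)} {X Y Z B A : Finset α} {e : α}

lemma SS.rmin_le (hX : X ∈ F) : SS.rmin F ≤ X.card :=
  Nat.sInf_le ⟨X, by simpa using hX, rfl⟩

lemma SS.fmin_mem (h : X ∈ SS.Fmin F) : X ∈ F := (Finset.mem_filter.1 h).1

lemma SS.fmin_le (h : X ∈ SS.Fmin F) (hY : Y ∈ F) : X.card ≤ Y.card :=
  (Finset.mem_filter.1 h).2 ▸ SS.rmin_le hY

lemma SS.mem_fmin_of (hX : X ∈ F) (h : ∀ Y ∈ F, X.card ≤ Y.card) : X ∈ SS.Fmin F := by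
  refine Finset.mem_filter.2 ⟨hX, le_antisymm ?_ (SS.rmin_le hX)⟩
  have hne : (Finset.card '' (F : Set (Finset α))).Nonempty := ⟨X.card, X, by simpa using hX, rfl⟩
  obtain ⟨Y, hY, hYc⟩ := Nat.sInf_mem hne
  rw [SS.rmin, ← hYc]
  exact h Y (by simpa using hY)

lemma SS.sd_mem (he : e ∈ X) : symmDiff {e} X = X.erase e := by
  ext a
  by_cases h : a = e <;> simp [Finset.mem_symmDiff, h, he]

lemma SS.sd_notMem (he : e ∉ X) : symmDiff {e} X = insert e X := by
  ext a
  by_cases h : a = e <;> simp [Finset.mem_symmDiff, h, he]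

lemma SS.mem_twist : Y ∈ SS.twist A F ↔ symmDiff A Y ∈ F := by
  simp only [SS.twist, Finset.mem_image]
  constructor
  · rintro ⟨X, hX, rfl⟩
    simpa [symmDiff_symmDiff_cancel_left] using hX
  · intro h
    exact ⟨_, h, symmDiff_symmDiff_cancel_left _ _⟩

lemma SS.lc_cases (h : Y ∈ SS.lc e F) :
    Y ∈ F ∨ ∃ Z ∈ F, e ∉ Z ∧ insert e Z = Y := by
  rw [SS.lc, Finset.mem_symmDiff] at h
  rcases h with ⟨h1, _⟩ | ⟨h1, _⟩
  · exact Or.inl h1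
  · simp only [Finset.mem_image, Finset.mem_filter] at h1
    obtain ⟨Z, ⟨hZ, he⟩, hin⟩ := h1
    exact Or.inr ⟨Z, hZ, he, hin⟩

lemma SS.mem_lc_of (hY : Y ∈ F) (h : ∀ Z ∈ F, e ∉ Z → insert e Z ≠ Y) : Y ∈ SS.lc e F := by
  rw [SS.lc, Finset.mem_symmDiff]
  left
  refine ⟨hY, ?_⟩
  simp only [Finset.mem_image, Finset.mem_filter, not_exists]
  rintro Z ⟨⟨hZ, he⟩, hin⟩
  exact h Z hZ he hin

lemma SS.mem_lc_of' (hY : Y ∉ F) (hZ : Z ∈ F) (he : e ∉ Z) (hin : insert e Z = Y) :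
    Y ∈ SS.lc e F := by
  rw [SS.lc, Finset.mem_symmDiff]
  exact Or.inr ⟨Finset.mem_image.2 ⟨Z, Finset.mem_filter.2 ⟨hZ, he⟩, hin⟩, hY⟩

lemma SS.step_star (hB : B ∈ SS.Fmin F) (he : e ∈ B) :
    B.erase e ∈ SS.Fmin (SS.twist {e} F) := by
  have hmem : B.erase e ∈ SS.twist {e} F := by
    rw [SS.mem_twist, SS.sd_notMem (Finset.notMem_erase e B), Finset.insert_erase he]
    exact SS.fmin_mem hB
  refine SS.mem_fmin_of hmem (fun Y hY => ?_)
  have h1 : B.card ≤ (symmDiff {e} Y).card := SS.fmin_le hB (SS.mem_twist.1 hY)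
  have h2 : (symmDiff {e} Y).card ≤ Y.card + 1 := by
    by_cases heY : e ∈ Y
    · rw [SS.sd_mem heY]
      exact le_trans (Finset.card_le_card (Finset.erase_subset _ _)) (Nat.le_succ _)
    · rw [SS.sd_notMem heY, Finset.card_insert_of_notMem heY]
  have h3 : (B.erase e).card = B.card - 1 := Finset.card_erase_of_mem he
  omega

lemma SS.step_lc (hB : B ∈ SS.Fmin F) : B ∈ SS.Fmin (SS.lc e F) := by
  have hmem : B ∈ SS.lc e F := by
    refine SS.mem_lc_of (SS.fmin_mem hB) (fun Z hZ he hin => ?_)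
    have h1 := SS.fmin_le hB hZ
    have h2 : (insert e Z).card = Z.card + 1 := Finset.card_insert_of_notMem he
    rw [hin] at h2
    omega
  refine SS.mem_fmin_of hmem (fun Y hY => ?_)
  rcases SS.lc_cases hY with h | ⟨Z, hZ, _, rfl⟩
  · exact SS.fmin_le hB h
  · exact le_trans (SS.fmin_le hB hZ) (Finset.card_le_card (Finset.subset_insert _ _))

lemma SS.step_sxs (hB : B ∈ SS.Fmin F) (he : e ∈ B) :
    B.erase e ∈ SS.Fmin (SS.twist {e} (SS.lc e (SS.twist {e} F))) := by
  have h1 : B.erase e ∈ SS.Fmin (SS.twist {e} F) := SS.step_star hB he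
  have hcard : (B.erase e).card = B.card - 1 := Finset.card_erase_of_mem he
  have hpos : 1 ≤ B.card := Finset.card_pos.2 ⟨e, he⟩
  have hBnotin : B ∉ SS.twist {e} F := by
    intro h
    rw [SS.mem_twist, SS.sd_mem he] at h
    have := SS.fmin_le hB h
    omega
  have hBin : B ∈ SS.lc e (SS.twist {e} F) :=
    SS.mem_lc_of' hBnotin (SS.fmin_mem h1) (Finset.notMem_erase e B) (Finset.insert_erase he)
  have hfin : B.erase e ∈ SS.twist {e} (SS.lc e (SS.twist {e} F)) := by
    rw [SS.mem_twist, SS.sd_notMem (Finset.notMem_erase e B), Finset.insert_erase he]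
    exact hBin
  have h2 : B.erase e ∈ SS.Fmin (SS.lc e (SS.twist {e} F)) := SS.step_lc h1
  refine SS.mem_fmin_of hfin (fun Y hY => ?_)
  have hX : symmDiff {e} Y ∈ SS.lc e (SS.twist {e} F) := SS.mem_twist.1 hY
  by_cases heY : e ∈ Y
  · have hlow : (B.erase e).card ≤ (symmDiff {e} Y).card := SS.fmin_le h2 hX
    rw [SS.sd_mem heY, Finset.card_erase_of_mem heY] at hlow
    omega
  · rw [SS.sd_notMem heY] at hX
    rcases SS.lc_cases hX with h | ⟨Z, hZ, heZ, hin⟩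
    · -- insert e Y ∈ twist {e} F, so Y = symmDiff {e} (insert e Y) ∈ F
      rw [SS.mem_twist, SS.sd_mem (Finset.mem_insert_self e Y),
        Finset.erase_insert heY] at h
      have := SS.fmin_le hB h
      omega
    · -- insert e Y = insert e Z with e ∉ Y, e ∉ Z, so Y = Z ∈ twist {e} F
      have hYZ : Y = Z := by
        have : (insert e Z).erase e = (insert e Y).erase e := by rw [hin]
        rw [Finset.erase_insert heZ, Finset.erase_insert heY] at this
        exact this.symm
      subst hYZ
      exact SS.fmin_le h1 hZ

lemma SS.fold_empty (step : Finset (Finset α) → α → Finset (Finset α))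
    (hstep : ∀ (G : Finset (Finset α)) (B : Finset α) (e : α),
      B ∈ SS.Fmin G → e ∈ B → B.erase e ∈ SS.Fmin (step G e)) :
    ∀ (l : List α), l.Nodup → ∀ G : Finset (Finset α), l.toFinset ∈ SS.Fmin G →
      (∅ : Finset α) ∈ l.foldl step G
  | [], _, G, h => by simpa using SS.fmin_mem (by simpa using h)
  | e :: l, hnd, G, h => by
    simp only [List.foldl_cons]
    have hel : e ∉ l := (List.nodup_cons.1 hnd).1
    have he : e ∈ (e :: l).toFinset := by simp
    have h2 := hstep G _ e h he
    have hrw : ((e :: l).toFinset).erase e = l.toFinset := by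
      rw [List.toFinset_cons, Finset.erase_insert (by simpa using hel)]
    rw [hrw] at h2
    exact SS.fold_empty step hstep l (List.nodup_cons.1 hnd).2 _ h2

end Aux

theorem stmt6 (F : Finset (Finset α)) (A : Finset α) (hA : A ∈ SS.Fmin F) :
    (∅ : Finset α) ∈ SS.wordOn [SS.Op.star] A F ∧
    (∅ : Finset α) ∈ SS.wordOn [SS.Op.star, SS.Op.cross] A F ∧
    (∅ : Finset α) ∈ SS.wordOn [SS.Op.cross, SS.Op.star] A F ∧
    (∅ : Finset α) ∈ SS.wordOn [SS.Op.star, SS.Op.cross, SS.Op.star] A F := by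
  have hnd := A.nodup_toList
  have htf : A.toList.toFinset ∈ SS.Fmin F := by rw [Finset.toList_toFinset]; exact hA
  refine ⟨?_, ?_, ?_, ?_⟩
  · exact SS.fold_empty _ (fun G B e hB he => by
      show B.erase e ∈ SS.Fmin (SS.twist {e} G)
      exact SS.step_star hB he) A.toList hnd F htf
  · exact SS.fold_empty _ (fun G B e hB he => by
      show B.erase e ∈ SS.Fmin (SS.lc e (SS.twist {e} G))
      exact SS.step_lc (SS.step_star hB he)) A.toList hnd F htf
  · exact SS.fold_empty _ (fun G B e hB he => by
      show B.erase e ∈ SS.Fmin (SS.twist {e} (SS.lc e G))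
      exact SS.step_star (SS.step_lc hB) he) A.toList hnd F htf
  · exact SS.fold_empty _ (fun G B e hB he => by
      show B.erase e ∈ SS.Fmin (SS.twist {e} (SS.lc e (SS.twist {e} G)))
      exact SS.step_sxs hB he) A.toList hnd F htf
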